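/- For allocation of a divisible homogeneous good, maximum weighted Nash social welfare is monotone when all valuations are concave. Precisely: let n ≥ 1 agents have valuations v_1, …, v_n : [0,1] → ℝ that are continuous, concave, strictly increasing, and satisfy v_i(x) > 0 for all x > 0. Let b and b' be entitlement vectors (positive entries summing to 1) with b 1-improving b' (b_1 > b'_1 and b_j ≤ b'_j for all j ≠ 1). Let A = (A_1, …, A_n) maximize ∏_i v_i(x_i)^{b_i} over all allocations (x_i ≥ 0, Σ x_i = 1), and let A' = (A'_1, …, A'_n) maximize ∏_i v_i(x_i)^{b'_i} over all allocations. Then A_1 ≥ A'_1; in particular v_1(A_1) ≥ v_1(A'_1), so the agent whose entitlement increased does not lose value. -/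

import Mathlib

open Finset

lemma aux_v0_nonneg (f : ℝ → ℝ) (hc : ContinuousOn f (Set.Icc 0 1))
    (hp : ∀ x : ℝ, 0 < x → x ≤ 1 → 0 < f x) : 0 ≤ f 0 := by
  have h0 : (0:ℝ) ∈ Set.Icc (0:ℝ) 1 := by constructor <;> norm_num
  have ht : Filter.Tendsto f (nhdsWithin 0 (Set.Ioc (0:ℝ) 1)) (nhds (f 0)) :=
    (hc 0 h0).mono Set.Ioc_subset_Icc_self
  haveI : (nhdsWithin (0:ℝ) (Set.Ioc (0:ℝ) 1)).NeBot := by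
    rw [nhdsWithin_Ioc_eq_nhdsGT (by norm_num : (0:ℝ) < 1)]
    infer_instance
  refine ge_of_tendsto ht ?_
  filter_upwards [self_mem_nhdsWithin] with x hx
  exact (hp x hx.1 hx.2).le

lemma aux_concave_incr (v : ℝ → ℝ) (hconc : ConcaveOn ℝ (Set.Icc 0 1) v)
    (a b d : ℝ) (ha : 0 ≤ a) (hd : 0 ≤ d) (hab : a + d ≤ b) (hb1 : b ≤ 1) :
    v a + v b ≤ v (a + d) + v (b - d) := by
  rcases eq_or_lt_of_le hd with h | h
  · rw [← h]; simp
  · have hba : 0 < b - a := by linarith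
    set l := d / (b - a) with hl
    have hl0 : 0 ≤ l := div_nonneg h.le hba.le
    have hl1 : l ≤ 1 := by rw [hl, div_le_one hba]; linarith
    have hmem_a : a ∈ Set.Icc (0:ℝ) 1 := ⟨ha, by linarith⟩
    have hmem_b : b ∈ Set.Icc (0:ℝ) 1 := ⟨by linarith, hb1⟩
    have hld : l * (b - a) = d := div_mul_cancel₀ d hba.ne'
    have h1 := hconc.2 hmem_a hmem_b (by linarith : (0:ℝ) ≤ 1 - l) hl0 (by ring)
    have h2 := hconc.2 hmem_a hmem_b hl0 (by linarith : (0:ℝ) ≤ 1 - l) (by ring)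
    simp only [smul_eq_mul] at h1 h2
    have e1 : (1 - l) * a + l * b = a + d := by nlinarith
    have e2 : l * a + (1 - l) * b = b - d := by nlinarith
    rw [e1] at h1; rw [e2] at h2
    nlinarith

lemma aux_log_incr (v : ℝ → ℝ) (hconc : ConcaveOn ℝ (Set.Icc 0 1) v)
    (hmono : StrictMonoOn v (Set.Icc 0 1))
    (a b d : ℝ) (ha : 0 ≤ a) (hd : 0 ≤ d) (hab : a + d ≤ b) (hb1 : b ≤ 1)
    (hva : 0 < v a) (hvbd : 0 < v (b - d)) :
    Real.log (v b) - Real.log (v (b - d)) ≤ Real.log (v (a + d)) - Real.log (v a) := by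
  have m := hmono.monotoneOn
  have hma : a ∈ Set.Icc (0:ℝ) 1 := ⟨ha, by linarith⟩
  have hmad : a + d ∈ Set.Icc (0:ℝ) 1 := ⟨by linarith, by linarith⟩
  have hmbd : b - d ∈ Set.Icc (0:ℝ) 1 := ⟨by linarith, by linarith⟩
  have hmb : b ∈ Set.Icc (0:ℝ) 1 := ⟨by linarith, hb1⟩
  have h1 : v a ≤ v (b - d) := m hma hmbd (by linarith)
  have h2 : v (b - d) ≤ v b := m hmbd hmb (by linarith)
  have h3 : v a ≤ v (a + d) := m hma hmad (by linarith)
  have hsum := aux_concave_incr v hconc a b d ha hd hab hb1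
  have hprod : v a * v b ≤ v (a + d) * v (b - d) := by nlinarith
  have hvb : 0 < v b := lt_of_lt_of_le hvbd h2
  have hvad : 0 < v (a + d) := lt_of_lt_of_le hva h3
  have hlog := Real.log_le_log (by positivity) hprod
  rw [Real.log_mul hva.ne' hvb.ne', Real.log_mul hvad.ne' hvbd.ne'] at hlog
  linarith

lemma aux_log_opt {n : ℕ} (w u1 u2 : Fin n → ℝ) (hw : ∀ i, 0 < w i)
    (h1 : ∀ i, 0 < u1 i) (h2 : ∀ i, 0 < u2 i)
    (h : ∏ i, u1 i ^ w i ≤ ∏ i, u2 i ^ w i) :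
    ∑ i, w i * Real.log (u1 i) ≤ ∑ i, w i * Real.log (u2 i) := by
  have e : ∀ (u : Fin n → ℝ), (∀ i, 0 < u i) →
      Real.log (∏ i, u i ^ w i) = ∑ i, w i * Real.log (u i) := by
    intro u hu
    rw [Real.log_prod (fun i _ => (Real.rpow_pos_of_pos (hu i) _).ne')]
    exact Finset.sum_congr rfl fun i _ => Real.log_rpow (hu i) _
  have hp1 : (0:ℝ) < ∏ i, u1 i ^ w i :=
    Finset.prod_pos fun i _ => Real.rpow_pos_of_pos (h1 i) _
  have := Real.log_le_log hp1 h
  rwa [e u1 h1, e u2 h2] at this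
theorem stmt_19 (n : ℕ) (hn : 0 < n) (v : Fin n → ℝ → ℝ)
    (hcont : ∀ i, ContinuousOn (v i) (Set.Icc 0 1))
    (hconc : ∀ i, ConcaveOn ℝ (Set.Icc 0 1) (v i))
    (hmono : ∀ i, StrictMonoOn (v i) (Set.Icc 0 1))
    (hpos : ∀ i, ∀ x : ℝ, 0 < x → x ≤ 1 → 0 < v i x)
    (b b' : Fin n → ℝ)
    (hb : ∀ i, 0 < b i) (hbsum : ∑ i, b i = 1)
    (hb' : ∀ i, 0 < b' i) (hb'sum : ∑ i, b' i = 1)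
    -- b 1-improves b'
    (himp1 : b' ⟨0, hn⟩ < b ⟨0, hn⟩)
    (himp2 : ∀ j, j ≠ ⟨0, hn⟩ → b j ≤ b' j)
    (A A' : Fin n → ℝ)
    (hA0 : ∀ j, 0 ≤ A j) (hA1 : ∑ j, A j = 1)
    (hA'0 : ∀ j, 0 ≤ A' j) (hA'1 : ∑ j, A' j = 1)
    -- A maximizes WNSW under b
    (hmaxA : ∀ x : Fin n → ℝ, (∀ j, 0 ≤ x j) → ∑ j, x j = 1 →
      ∏ j, (v j (x j)) ^ (b j) ≤ ∏ j, (v j (A j)) ^ (b j))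
    -- A' maximizes WNSW under b'
    (hmaxA' : ∀ x : Fin n → ℝ, (∀ j, 0 ≤ x j) → ∑ j, x j = 1 →
      ∏ j, (v j (x j)) ^ (b' j) ≤ ∏ j, (v j (A' j)) ^ (b' j)) :
    A' ⟨0, hn⟩ ≤ A ⟨0, hn⟩ ∧
      v ⟨0, hn⟩ (A' ⟨0, hn⟩) ≤ v ⟨0, hn⟩ (A ⟨0, hn⟩) := by
  set i0 : Fin n := ⟨0, hn⟩ with hi0def
  -- basic nonneg facts
  have hv0 : ∀ i, (0:ℝ) ≤ v i 0 := fun i => aux_v0_nonneg (v i) (hcont i) (hpos i)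
  have hvnn : ∀ i (x : ℝ), 0 ≤ x → x ≤ 1 → 0 ≤ v i x := by
    intro i x hx hx1
    rcases hx.eq_or_lt with h | h
    · rw [← h]; exact hv0 i
    · exact (hpos i x h hx1).le
  have hle1 : ∀ (f : Fin n → ℝ), (∀ j, 0 ≤ f j) → ∑ j, f j = 1 → ∀ j, f j ≤ 1 := by
    intro f h hs j
    have := Finset.single_le_sum (fun i _ => h i) (Finset.mem_univ j)
    rwa [hs] at this
  have hAle1 := hle1 A hA0 hA1
  have hA'le1 := hle1 A' hA'0 hA'1
  -- positivity of values at maximizers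
  have hposprod : ∀ (w : Fin n → ℝ), (∀ i, 0 < w i) →
      ∀ (X : Fin n → ℝ), (∀ j, 0 ≤ X j) → (∑ j, X j = 1) →
      (∀ x : Fin n → ℝ, (∀ j, 0 ≤ x j) → ∑ j, x j = 1 →
        ∏ j, (v j (x j)) ^ (w j) ≤ ∏ j, (v j (X j)) ^ (w j)) →
      ∀ j, 0 < v j (X j) := by
    intro w hw X hX0 hX1 hmax
    have hn1 : (1:ℝ) ≤ (n:ℝ) := by exact_mod_cast hn
    have hnpos : (0:ℝ) < (n:ℝ) := by positivity
    have husum : ∑ _j : Fin n, (1:ℝ)/n = 1 := by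
      rw [Finset.sum_const, Finset.card_univ, Fintype.card_fin, nsmul_eq_mul]
      field_simp
    have hup : ∀ j : Fin n, 0 < v j ((1:ℝ)/n) := fun j =>
      hpos j _ (by positivity) (by rw [div_le_one hnpos]; exact hn1)
    have hprodpos : (0:ℝ) < ∏ j, (v j ((1:ℝ)/n)) ^ (w j) :=
      Finset.prod_pos fun j _ => Real.rpow_pos_of_pos (hup j) _
    have hbig : (0:ℝ) < ∏ j, (v j (X j)) ^ (w j) :=
      lt_of_lt_of_le hprodpos (hmax (fun _ => (1:ℝ)/n) (fun _ => by positivity) husum)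
    intro j
    rcases (hvnn j (X j) (hX0 j) (hle1 X hX0 hX1 j)).eq_or_lt with h | h
    · exfalso
      have : ∏ j, (v j (X j)) ^ (w j) = 0 :=
        Finset.prod_eq_zero (Finset.mem_univ j)
          (by rw [← h, Real.zero_rpow (hw j).ne'])
      rw [this] at hbig; exact lt_irrefl _ hbig
    · exact h
  have hApos : ∀ j, 0 < v j (A j) := hposprod b hb A hA0 hA1 hmaxA
  have hA'pos : ∀ j, 0 < v j (A' j) := hposprod b' hb' A' hA'0 hA'1 hmaxA'
  -- main claim
  have key : A' i0 ≤ A i0 := by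
    by_contra hcon
    push_neg at hcon
    set δ : ℝ := A' i0 - A i0 with hδdef
    have hδ : 0 < δ := by simp only [hδdef]; linarith
    set c : Fin n → ℝ := fun j => max (A j - A' j) 0 with hcdef
    have hc0 : ∀ j, 0 ≤ c j := fun j => le_max_right _ _
    have hcA : ∀ j, A j - A' j ≤ c j := fun j => le_max_left _ _
    have hcAj : ∀ j, c j ≤ A j := fun j => max_le (by linarith [hA'0 j]) (hA0 j)
    have hci0 : c i0 = 0 := max_eq_right (by linarith)
    set C : ℝ := ∑ j, c j with hCdef
    have hsum0 : ∑ j, (A j - A' j) = 0 := by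
      rw [Finset.sum_sub_distrib, hA1, hA'1]; ring
    have hEr : ∑ j ∈ Finset.univ.erase i0, (A j - A' j) = δ := by
      have h2 := Finset.add_sum_erase Finset.univ (fun j => A j - A' j)
        (Finset.mem_univ i0)
      rw [hsum0] at h2
      simp only [hδdef]; linarith
    have hδC : δ ≤ C := by
      calc δ = ∑ j ∈ Finset.univ.erase i0, (A j - A' j) := hEr.symm
        _ ≤ ∑ j ∈ Finset.univ.erase i0, c j :=
            Finset.sum_le_sum fun j _ => hcA j
        _ ≤ C := Finset.sum_le_sum_of_subset_of_nonneg
            (Finset.erase_subset _ _) (fun j _ _ => hc0 j)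
    have hCpos : 0 < C := lt_of_lt_of_le hδ hδC
    set ρ : ℝ := δ / (2 * C) with hρdef
    have hρ0 : 0 < ρ := by positivity
    have hρh : ρ ≤ 1/2 := by
      rw [hρdef, div_le_div_iff₀ (by positivity) (by norm_num)]
      linarith
    set d : Fin n → ℝ := fun j => c j * ρ with hddef
    have hd0 : ∀ j, 0 ≤ d j := fun j => mul_nonneg (hc0 j) hρ0.le
    have hdc : ∀ j, d j ≤ c j / 2 := by
      intro j
      calc c j * ρ ≤ c j * (1/2) := mul_le_mul_of_nonneg_left hρh (hc0 j)
        _ = c j / 2 := by ring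
    have hdi0 : d i0 = 0 := by simp [hddef, hci0]
    set t : ℝ := δ / 2 with htdef
    have ht0 : 0 < t := by positivity
    have hdsum : ∑ j, d j = t := by
      simp only [hddef]
      rw [← Finset.sum_mul, ← hCdef, hρdef, htdef]
      field_simp
    have hder : ∑ j ∈ Finset.univ.erase i0, d j = t := by
      have h2 := Finset.add_sum_erase Finset.univ d (Finset.mem_univ i0)
      rw [hdsum, hdi0] at h2
      linarith
    -- estimate d j > 0 cases
    have hdfact : ∀ j, 0 < d j → A' j < A j ∧ c j = A j - A' j := by
      intro j hj
      have hcj : 0 < c j := by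
        by_contra hc
        push_neg at hc
        have : c j = 0 := le_antisymm hc (hc0 j)
        rw [hddef] at hj; simp only at hj
        rw [this] at hj; simp at hj
      have hAA' : A' j < A j := by
        by_contra hA
        push_neg at hA
        have : c j = 0 := max_eq_right (by linarith)
        linarith
      exact ⟨hAA', max_eq_left (by linarith)⟩
    -- the exchange allocations
    set B : Fin n → ℝ := fun j => if j = i0 then A i0 + t else A j - d j with hBdef
    set B' : Fin n → ℝ := fun j => if j = i0 then A' i0 - t else A' j + d j with hB'def
    have hAt : A' i0 - t = A i0 + t := by rw [htdef, hδdef]; ring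
    have hB0 : ∀ j, 0 ≤ B j := by
      intro j
      by_cases hj : j = i0
      · simp only [hBdef, hj, if_pos rfl]; linarith [hA0 i0]
      · simp only [hBdef, if_neg hj]
        have := hdc j; have := hcAj j; linarith [hc0 j]
    have hBsum : ∑ j, B j = 1 := by
      have h2 := Finset.add_sum_erase Finset.univ B (Finset.mem_univ i0)
      have h3 : ∑ j ∈ Finset.univ.erase i0, B j
          = ∑ j ∈ Finset.univ.erase i0, (A j - d j) := by
        refine Finset.sum_congr rfl fun j hj => ?_
        simp only [hBdef, if_neg (Finset.mem_erase.1 hj).1]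
      have h4 : ∑ j ∈ Finset.univ.erase i0, (A j - d j)
          = (1 - A i0) - t := by
        rw [Finset.sum_sub_distrib, hder]
        have h5 := Finset.add_sum_erase Finset.univ A (Finset.mem_univ i0)
        rw [hA1] at h5
        linarith
      have h6 : B i0 = A i0 + t := by simp [hBdef]
      rw [h3, h4, h6] at h2
      linarith
    have hB'0 : ∀ j, 0 ≤ B' j := by
      intro j
      by_cases hj : j = i0
      · simp only [hB'def, hj, if_pos rfl]; rw [hAt]; linarith [hA0 i0]
      · simp only [hB'def, if_neg hj]; linarith [hA'0 j, hd0 j]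
    have hB'sum : ∑ j, B' j = 1 := by
      have h2 := Finset.add_sum_erase Finset.univ B' (Finset.mem_univ i0)
      have h3 : ∑ j ∈ Finset.univ.erase i0, B' j
          = ∑ j ∈ Finset.univ.erase i0, (A' j + d j) := by
        refine Finset.sum_congr rfl fun j hj => ?_
        simp only [hB'def, if_neg (Finset.mem_erase.1 hj).1]
      have h4 : ∑ j ∈ Finset.univ.erase i0, (A' j + d j)
          = (1 - A' i0) + t := by
        rw [Finset.sum_add_distrib, hder]
        have h5 := Finset.add_sum_erase Finset.univ A' (Finset.mem_univ i0)
        rw [hA'1] at h5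
        linarith
      have h6 : B' i0 = A' i0 - t := by simp [hB'def]
      rw [h3, h4, h6] at h2
      linarith
    have hBle1 := hle1 B hB0 hBsum
    have hB'le1 := hle1 B' hB'0 hB'sum
    -- positivity of values at B, B'
    have hvB : ∀ j, 0 < v j (B j) := by
      intro j
      by_cases hj : j = i0
      · refine hpos j _ ?_ (hBle1 j)
        simp only [hBdef, hj, if_pos rfl]; linarith [hA0 i0]
      · rcases (hd0 j).eq_or_lt with h | h
        · have : B j = A j := by simp only [hBdef, if_neg hj, ← h]; ring
          rw [this]; exact hApos j
        · obtain ⟨h1, h2⟩ := hdfact j h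
          refine hpos j _ ?_ (hBle1 j)
          simp only [hBdef, if_neg hj]
          have := hdc j; rw [h2] at this
          linarith [hA'0 j]
    have hvB' : ∀ j, 0 < v j (B' j) := by
      intro j
      by_cases hj : j = i0
      · refine hpos j _ ?_ (hB'le1 j)
        simp only [hB'def, hj, if_pos rfl]; rw [hAt]; linarith [hA0 i0]
      · rcases (hd0 j).eq_or_lt with h | h
        · have : B' j = A' j := by simp only [hB'def, if_neg hj, ← h]; ring
          rw [this]; exact hA'pos j
        · refine hpos j _ ?_ (hB'le1 j)
          simp only [hB'def, if_neg hj]; linarith [hA'0 j]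
    -- logarithmic optimality inequalities
    have hLA : ∑ j, b j * Real.log (v j (B j)) ≤ ∑ j, b j * Real.log (v j (A j)) :=
      aux_log_opt b (fun j => v j (B j)) (fun j => v j (A j)) hb hvB hApos
        (hmaxA B hB0 hBsum)
    have hLA' : ∑ j, b' j * Real.log (v j (B' j)) ≤ ∑ j, b' j * Real.log (v j (A' j)) :=
      aux_log_opt b' (fun j => v j (B' j)) (fun j => v j (A' j)) hb' hvB' hA'pos
        (hmaxA' B' hB'0 hB'sum)
    -- split sums at i0
    have hSA : b i0 * (Real.log (v i0 (A i0 + t)) - Real.log (v i0 (A i0)))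
        ≤ ∑ j ∈ Finset.univ.erase i0,
            b j * (Real.log (v j (A j)) - Real.log (v j (A j - d j))) := by
      have e1 := Finset.add_sum_erase Finset.univ
        (fun j => b j * Real.log (v j (B j))) (Finset.mem_univ i0)
      have e2 := Finset.add_sum_erase Finset.univ
        (fun j => b j * Real.log (v j (A j))) (Finset.mem_univ i0)
      have e3 : ∑ j ∈ Finset.univ.erase i0, b j * Real.log (v j (B j))
          = ∑ j ∈ Finset.univ.erase i0, b j * Real.log (v j (A j - d j)) := by
        refine Finset.sum_congr rfl fun j hj => ?_
        simp only [hBdef, if_neg (Finset.mem_erase.1 hj).1]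
      have e4 : B i0 = A i0 + t := by simp [hBdef]
      rw [e3, e4] at e1
      simp only [mul_sub]
      rw [Finset.sum_sub_distrib]
      linarith
    have hSA' : ∑ j ∈ Finset.univ.erase i0,
          b' j * (Real.log (v j (A' j + d j)) - Real.log (v j (A' j)))
        ≤ b' i0 * (Real.log (v i0 (A' i0)) - Real.log (v i0 (A' i0 - t))) := by
      have e1 := Finset.add_sum_erase Finset.univ
        (fun j => b' j * Real.log (v j (B' j))) (Finset.mem_univ i0)
      have e2 := Finset.add_sum_erase Finset.univ
        (fun j => b' j * Real.log (v j (A' j))) (Finset.mem_univ i0)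
      have e3 : ∑ j ∈ Finset.univ.erase i0, b' j * Real.log (v j (B' j))
          = ∑ j ∈ Finset.univ.erase i0, b' j * Real.log (v j (A' j + d j)) := by
        refine Finset.sum_congr rfl fun j hj => ?_
        simp only [hB'def, if_neg (Finset.mem_erase.1 hj).1]
      have e4 : B' i0 = A' i0 - t := by simp [hB'def]
      rw [e3, e4] at e1
      simp only [mul_sub]
      rw [Finset.sum_sub_distrib]
      linarith
    -- pointwise comparison on the erase set
    have hPt : ∀ j ∈ Finset.univ.erase i0,
        b j * (Real.log (v j (A j)) - Real.log (v j (A j - d j)))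
          ≤ b' j * (Real.log (v j (A' j + d j)) - Real.log (v j (A' j))) := by
      intro j hj
      have hji0 : j ≠ i0 := (Finset.mem_erase.1 hj).1
      rcases (hd0 j).eq_or_lt with h | h
      · rw [← h]; simp
      · obtain ⟨hAA', hcEq⟩ := hdfact j h
        have hvBj : 0 < v j (A j - d j) := by
          have := hvB j; simpa only [hBdef, if_neg hji0] using this
        have hinc : Real.log (v j (A j)) - Real.log (v j (A j - d j))
            ≤ Real.log (v j (A' j + d j)) - Real.log (v j (A' j)) := by
          refine aux_log_incr (v j) (hconc j) (hmono j) (A' j) (A j) (d j)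
            (hA'0 j) (hd0 j) ?_ (hAle1 j) (hA'pos j) hvBj
          have := hdc j; rw [hcEq] at this; linarith
        have hincnn : 0 ≤ Real.log (v j (A j)) - Real.log (v j (A j - d j)) := by
          have hm : v j (A j - d j) ≤ v j (A j) := by
            refine (hmono j).monotoneOn ⟨?_, ?_⟩ ⟨hA0 j, hAle1 j⟩ (by linarith)
            · have := hvB j
              have hBj0 := hB0 j
              simpa only [hBdef, if_neg hji0] using hBj0
            · linarith [hAle1 j, hd0 j]
          exact sub_nonneg.2 (Real.log_le_log hvBj hm)
        have hbb' : b j ≤ b' j := himp2 j hji0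
        linarith [mul_nonneg (sub_nonneg.2 hbb') hincnn,
          mul_nonneg (hb' j).le (sub_nonneg.2 hinc)]
    have hsum_le := Finset.sum_le_sum hPt
    -- concavity at agent i0
    have hAti : A i0 + t ≤ 1 := by linarith [hA'le1 i0]
    have hconcav : Real.log (v i0 (A' i0)) - Real.log (v i0 (A' i0 - t))
        ≤ Real.log (v i0 (A i0 + t)) - Real.log (v i0 (A i0)) := by
      refine aux_log_incr (v i0) (hconc i0) (hmono i0) (A i0) (A' i0) t
        (hA0 i0) ht0.le (by linarith) (hA'le1 i0) (hApos i0) ?_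
      rw [hAt]; exact hpos i0 _ (by linarith [hA0 i0]) hAti
    have hΔ : 0 < Real.log (v i0 (A i0 + t)) - Real.log (v i0 (A i0)) := by
      have := hmono i0 ⟨hA0 i0, hAle1 i0⟩
        ⟨by linarith [hA0 i0], hAti⟩ (by linarith)
      exact sub_pos.2 (Real.log_lt_log (hApos i0) this)
    -- final contradiction
    have hchain : b i0 * (Real.log (v i0 (A i0 + t)) - Real.log (v i0 (A i0)))
        ≤ b' i0 * (Real.log (v i0 (A i0 + t)) - Real.log (v i0 (A i0))) := by
      calc b i0 * (Real.log (v i0 (A i0 + t)) - Real.log (v i0 (A i0)))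
          ≤ ∑ j ∈ Finset.univ.erase i0,
              b j * (Real.log (v j (A j)) - Real.log (v j (A j - d j))) := hSA
        _ ≤ ∑ j ∈ Finset.univ.erase i0,
              b' j * (Real.log (v j (A' j + d j)) - Real.log (v j (A' j))) := hsum_le
        _ ≤ b' i0 * (Real.log (v i0 (A' i0)) - Real.log (v i0 (A' i0 - t))) := hSA'
        _ ≤ b' i0 * (Real.log (v i0 (A i0 + t)) - Real.log (v i0 (A i0))) :=
            mul_le_mul_of_nonneg_left hconcav (hb' i0).le
    have := mul_lt_mul_of_pos_right himp1 hΔ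
    linarith
  refine ⟨key, ?_⟩
  exact (hmono i0).monotoneOn ⟨hA'0 i0, hA'le1 i0⟩ ⟨hA0 i0, hAle1 i0⟩ key
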